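/- If a PA A has a sequence of finite words (w_i)_{i≥1} with P_A(w_i) > 1 − 2^{−i}, and C is built from A so that after reading w_i from the initial distribution the mass on q_f equals P_A(w_i), and # resets C to its initial distribution, then the infinite word v = w_1 # w_2 # w_3 # ⋯ satisfies limsup_{n→∞} ‖C^v_n‖ = 1, i.e., v is weakly synchronizing for C. -/

import Mathlib

open Filter Finset

/-- A probability distribution on a finite type. -/
def IsDist {Q : Type*} [Fintype Q] (d : Q → ℝ) : Prop :=
  (∀ q, 0 ≤ d q) ∧ ∑ q, d q = 1

/-- The norm of a distribution: its maximal value. -/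
noncomputable def dnorm {Q : Type*} [Fintype Q] [Nonempty Q] (d : Q → ℝ) : ℝ :=
  Finset.univ.sup' Finset.univ_nonempty d

/-- A probabilistic automaton over states `Q` and alphabet `A`. -/
structure PA (Q : Type*) (A : Type*) [Fintype Q] where
  init : Q → ℝ
  init_dist : IsDist init
  trans : Q → A → Q → ℝ
  trans_dist : ∀ q σ, IsDist (trans q σ)

variable {Q A : Type*} [Fintype Q]

/-- One transition step applied to a distribution. -/
def PAstep (M : PA Q A) (d : Q → ℝ) (σ : A) : Q → ℝ :=
  fun q => ∑ q', d q' * M.trans q' σ q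

/-- Computation of a PA on a finite word, starting from distribution `μ`. -/
def PArun (M : PA Q A) (μ : Q → ℝ) (w : List A) : Q → ℝ :=
  w.foldl (PAstep M) μ

/-- Outcome of a PA on an infinite word, started from `μ`. -/
def PAoutcomeFrom (M : PA Q A) (μ : Q → ℝ) (w : ℕ → A) : ℕ → Q → ℝ
  | 0 => μ
  | n + 1 => PAstep M (PAoutcomeFrom M μ w n) (w n)

/-- Outcome of a PA on an infinite word from the initial distribution. -/
def PAoutcome (M : PA Q A) (w : ℕ → A) : ℕ → Q → ℝ :=
  PAoutcomeFrom M M.init w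

/-- The prefix `w_1 # w_2 # ⋯ w_k #` of the infinite word `w_1 # w_2 # ⋯`. -/
def blocks {A : Type*} (ws : ℕ → List A) (hash : A) : ℕ → List A
  | 0 => []
  | k + 1 => blocks ws hash k ++ ws (k + 1) ++ [hash]

/-- The infinite word `w_1 # w_2 # w_3 # ⋯`. -/
def interleave {A : Type*} (ws : ℕ → List A) (hash : A) : ℕ → A :=
  fun n => (blocks ws hash (n + 1)).getD n hash

lemma isDist_step (M : PA Q A) {d : Q → ℝ} (hd : IsDist d) (σ : A) :
    IsDist (PAstep M d σ) := by
  constructor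
  · intro q
    exact Finset.sum_nonneg fun q' _ => mul_nonneg (hd.1 q') ((M.trans_dist q' σ).1 q)
  · simp only [PAstep]
    rw [Finset.sum_comm]
    calc ∑ q', ∑ q, d q' * M.trans q' σ q
        = ∑ q', d q' * ∑ q, M.trans q' σ q := by
          simp [Finset.mul_sum]
      _ = 1 := by
          simp only [fun q' => (M.trans_dist q' σ).2]
          simpa using hd.2

lemma isDist_run (M : PA Q A) {μ : Q → ℝ} (hμ : IsDist μ) (w : List A) :
    IsDist (PArun M μ w) := by
  induction w generalizing μ with
  | nil => exact hμ
  | cons a l ih => exact ih (isDist_step M hμ a)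

lemma run_append (M : PA Q A) (μ : Q → ℝ) (u v : List A) :
    PArun M μ (u ++ v) = PArun M (PArun M μ u) v :=
  List.foldl_append

lemma step_hash (C : PA Q A) (hash : A) (hreset : ∀ q, C.trans q hash = C.init)
    {d : Q → ℝ} (hd : IsDist d) : PAstep C d hash = C.init := by
  funext q
  simp only [PAstep, hreset, ← Finset.sum_mul, hd.2, one_mul]

lemma run_blocks (C : PA Q A) (hash : A) (hreset : ∀ q, C.trans q hash = C.init)
    (ws : ℕ → List A) (k : ℕ) :
    PArun C C.init (blocks ws hash k) = C.init := by
  induction k with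
  | zero => rfl
  | succ k ih =>
    show PArun C C.init (blocks ws hash k ++ ws (k+1) ++ [hash]) = C.init
    rw [run_append]
    show PAstep C (PArun C C.init (blocks ws hash k ++ ws (k+1))) hash = C.init
    exact step_hash C hash hreset
      (isDist_run C C.init_dist _)

lemma outcome_eq_run (M : PA Q A) (μ : Q → ℝ) (w : ℕ → A) (n : ℕ) :
    PAoutcomeFrom M μ w n = PArun M μ ((List.range n).map w) := by
  induction n with
  | zero => rfl
  | succ n ih =>
    rw [List.range_succ, List.map_append]
    show PAstep M (PAoutcomeFrom M μ w n) (w n) = _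
    rw [ih, run_append]
    rfl

lemma blocks_prefix_succ (ws : ℕ → List A) (hash : A) (k : ℕ) :
    (blocks ws hash k) <+: (blocks ws hash (k+1)) := by
  show blocks ws hash k <+: blocks ws hash k ++ ws (k+1) ++ [hash]
  rw [List.append_assoc]
  exact List.prefix_append _ _

lemma blocks_mono (ws : ℕ → List A) (hash : A) {k m : ℕ} (h : k ≤ m) :
    (blocks ws hash k) <+: (blocks ws hash m) := by
  induction m, h using Nat.le_induction with
  | base => exact List.prefix_refl _
  | succ m hm ih => exact ih.trans (blocks_prefix_succ ws hash m)

lemma blocks_length (ws : ℕ → List A) (hash : A) (k : ℕ) :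
    k ≤ (blocks ws hash k).length := by
  induction k with
  | zero => simp
  | succ k ih =>
    show k + 1 ≤ (blocks ws hash k ++ ws (k+1) ++ [hash]).length
    simp only [List.length_append, List.length_singleton]
    omega

lemma interleave_prefix (ws : ℕ → List A) (hash : A) {l : List A} {m : ℕ}
    (hl : l <+: blocks ws hash m) :
    (List.range l.length).map (interleave ws hash) = l := by
  apply List.ext_getElem
  · simp
  · intro i h1 h2
    simp only [List.getElem_map, List.getElem_range]
    simp only [List.length_map, List.length_range] at h1
    have hib : i < (blocks ws hash (i+1)).length := blocks_length ws hash (i+1)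
    have him : i < (blocks ws hash m).length := lt_of_lt_of_le h2 hl.length_le
    have key : (blocks ws hash (i+1)).getD i hash = l[i] := by
      rcases le_total (i+1) m with hc | hc
      · have hp := blocks_mono ws hash hc
        rw [List.getD_eq_getElem _ _ hib, hl.getElem h2, ← hp.getElem hib]
      · have hp := blocks_mono ws hash hc
        have : l <+: blocks ws hash (i+1) := hl.trans hp
        rw [List.getD_eq_getElem _ _ hib, this.getElem h2]
    exact key

lemma dist_le_one {d : Q → ℝ} (hd : IsDist d) (q : Q) : d q ≤ 1 := by
  rw [← hd.2]
  exact Finset.single_le_sum (fun q' _ => hd.1 q') (Finset.mem_univ q)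

lemma dnorm_le_one [Nonempty Q] {d : Q → ℝ} (hd : IsDist d) : dnorm d ≤ 1 :=
  Finset.sup'_le _ _ fun q _ => dist_le_one hd q

lemma le_dnorm [Nonempty Q] (d : Q → ℝ) (q : Q) : d q ≤ dnorm d :=
  Finset.le_sup' _ (Finset.mem_univ q)


/-- If `(w_i)_{i ≥ 1}` are finite words such that reading `w_i` from the
    initial distribution of `C` puts mass `> 1 - 2^{-i}` on `q_f`, and `#`
    resets `C` to its initial distribution, then `v = w_1 # w_2 # w_3 # ⋯` is
    weakly synchronizing for `C`. -/
theorem stmt_8 {Q A : Type*} [Fintype Q] [Nonempty Q] (C : PA Q A)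
    (qf : Q) (hash : A) (hreset : ∀ q, C.trans q hash = C.init)
    (ws : ℕ → List A)
    (hws : ∀ i : ℕ, 1 ≤ i → PArun C C.init (ws i) qf > 1 - (2 : ℝ)⁻¹ ^ i) :
    Filter.limsup (fun n => dnorm (PAoutcome C (interleave ws hash) n))
      Filter.atTop = 1 := by
  set f : ℕ → ℝ := fun n => dnorm (PAoutcome C (interleave ws hash) n) with hf
  have hdist : ∀ n, IsDist (PAoutcome C (interleave ws hash) n) := by
    intro n
    rw [PAoutcome, outcome_eq_run]
    exact isDist_run C C.init_dist _
  have hfle : ∀ n, f n ≤ 1 := fun n => dnorm_le_one (hdist n)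
  have hfge : ∀ n, 0 ≤ f n := fun n => by
    obtain ⟨q⟩ := ‹Nonempty Q›
    exact le_trans ((hdist n).1 q) (le_dnorm _ q)
  -- key: at time n_k the distribution is PArun C C.init (ws (k+1))
  have key : ∀ k : ℕ,
      1 - (2:ℝ)⁻¹ ^ (k+1) ≤ f ((blocks ws hash k).length + (ws (k+1)).length) := by
    intro k
    set nk := (blocks ws hash k).length + (ws (k+1)).length
    have hpre : (blocks ws hash k ++ ws (k+1)) <+: blocks ws hash (k+1) := by
      show _ <+: blocks ws hash k ++ ws (k+1) ++ [hash]
      exact List.prefix_append _ _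
    have hlen : (blocks ws hash k ++ ws (k+1)).length = nk := by
      simp [nk]
    have hout : PAoutcome C (interleave ws hash) nk
        = PArun C C.init (ws (k+1)) := by
      rw [PAoutcome, outcome_eq_run]
      rw [← hlen, interleave_prefix ws hash hpre, run_append,
        run_blocks C hash hreset]
    have := hws (k+1) (Nat.le_add_left 1 k)
    calc 1 - (2:ℝ)⁻¹ ^ (k+1) ≤ PArun C C.init (ws (k+1)) qf := le_of_lt this
      _ ≤ dnorm (PArun C C.init (ws (k+1))) := le_dnorm _ qf
      _ = f nk := (congrArg dnorm hout).symm
  have hbddabove : IsBoundedUnder (· ≤ ·) atTop f := ⟨1, eventually_map.mpr (Eventually.of_forall hfle)⟩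
  have hbddbelow : IsBoundedUnder (· ≥ ·) atTop f := ⟨0, eventually_map.mpr (Eventually.of_forall hfge)⟩
  apply le_antisymm
  · exact limsup_le_of_le hbddbelow.isCoboundedUnder_le (Eventually.of_forall hfle)
  · -- 1 ≤ limsup
    have hstep : ∀ k : ℕ, 1 - (2:ℝ)⁻¹ ^ (k+1) ≤ limsup f atTop := by
      intro k
      apply le_limsup_of_frequently_le _ hbddabove
      rw [frequently_atTop]
      intro N
      refine ⟨(blocks ws hash (max k N)).length + (ws (max k N + 1)).length, ?_, ?_⟩
      · calc N ≤ max k N := le_max_right _ _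
          _ ≤ (blocks ws hash (max k N)).length := blocks_length ws hash _
          _ ≤ _ := Nat.le_add_right _ _
      · refine le_trans ?_ (key (max k N))
        have : (2:ℝ)⁻¹ ^ (max k N + 1) ≤ (2:ℝ)⁻¹ ^ (k+1) := by
          apply pow_le_pow_of_le_one (by norm_num) (by norm_num)
          omega
        linarith
    by_contra h
    push_neg at h
    obtain ⟨k, hk⟩ := exists_pow_lt_of_lt_one (by linarith : (0:ℝ) < 1 - limsup f atTop)
      (by norm_num : (2:ℝ)⁻¹ < 1)
    have := hstep k
    have h2 : (2:ℝ)⁻¹ ^ (k+1) ≤ (2:ℝ)⁻¹ ^ k :=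
      pow_le_pow_of_le_one (by norm_num) (by norm_num) (Nat.le_succ k)
    linarith
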